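/- Let a, b, c ∈ ℂ satisfy conj(a)·b + conj(c)·a + conj(b)·c = 0 and |a|² + |b|² + |c|² = 1. Then there exist real numbers θ, φ₁, φ₂ such that a = e^{iθ}(1 + e^{iφ₁} + e^{iφ₂})/3, b = e^{iθ}(1 + e^{2πi/3}e^{iφ₁} + e^{-2πi/3}e^{iφ₂})/3, and c = e^{iθ}(1 + e^{-2πi/3}e^{iφ₁} + e^{2πi/3}e^{iφ₂})/3. -/

import Mathlib

private lemma exp_arg_of_unit (z : ℂ) (h : (starRingEnd ℂ) z * z = 1) :
    z = Complex.exp (z.arg * Complex.I) := by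
  have hn : (Complex.normSq z : ℂ) = 1 := by
    rw [← Complex.mul_conj]; linear_combination h
  have hn' : Complex.normSq z = 1 := by exact_mod_cast hn
  have habs : ‖z‖ = 1 := by
    nlinarith [norm_nonneg z, Complex.sq_norm z]
  nth_rewrite 1 [← Complex.norm_mul_exp_arg_mul_I z]
  rw [habs, Complex.ofReal_one, one_mul]

/-- Every solution of the unitarity conditions `conj(a)b + conj(c)a + conj(b)c = 0`
and `|a|² + |b|² + |c|² = 1` is, up to a global phase `e^{iθ}`, of the form
`a = e^{iθ}(1 + e^{iφ₁} + e^{iφ₂})/3`,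
`b = e^{iθ}(1 + e^{2πi/3} e^{iφ₁} + e^{-2πi/3} e^{iφ₂})/3`,
`c = e^{iθ}(1 + e^{-2πi/3} e^{iφ₁} + e^{2πi/3} e^{iφ₂})/3`. -/
theorem three_generator_coefficients_classification (a b c : ℂ)
    (horth : (starRingEnd ℂ) a * b + (starRingEnd ℂ) c * a + (starRingEnd ℂ) b * c = 0)
    (hnorm : ‖a‖ ^ 2 + ‖b‖ ^ 2 + ‖c‖ ^ 2 = 1) :
    ∃ θ φ₁ φ₂ : ℝ,
      a = Complex.exp (θ * Complex.I) *
        ((1 + Complex.exp (φ₁ * Complex.I) + Complex.exp (φ₂ * Complex.I)) / 3) ∧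
      b = Complex.exp (θ * Complex.I) *
        ((1 + Complex.exp (2 * Real.pi * Complex.I / 3) * Complex.exp (φ₁ * Complex.I)
          + Complex.exp (-(2 * Real.pi * Complex.I) / 3) * Complex.exp (φ₂ * Complex.I)) / 3) ∧
      c = Complex.exp (θ * Complex.I) *
        ((1 + Complex.exp (-(2 * Real.pi * Complex.I) / 3) * Complex.exp (φ₁ * Complex.I)
          + Complex.exp (2 * Real.pi * Complex.I / 3) * Complex.exp (φ₂ * Complex.I)) / 3) := by
  set ω : ℂ := Complex.exp (2 * Real.pi * Complex.I / 3) with hωdef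
  have hωne0 : ω ≠ 0 := Complex.exp_ne_zero _
  have hω3 : ω ^ 3 = 1 := by
    rw [hωdef, pow_succ, pow_succ, pow_one, ← Complex.exp_add, ← Complex.exp_add,
      show 2 * (Real.pi:ℂ) * Complex.I / 3 + 2 * (Real.pi:ℂ) * Complex.I / 3
        + 2 * (Real.pi:ℂ) * Complex.I / 3 = 2 * Real.pi * Complex.I by ring]
    exact Complex.exp_two_pi_mul_I
  have hωne1 : ω ≠ 1 := by
    intro h
    rw [hωdef, Complex.exp_eq_one_iff] at h
    obtain ⟨n, hn⟩ := h
    have hπ : (Real.pi : ℂ) ≠ 0 := by exact_mod_cast Real.pi_ne_zero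
    have h2 : (2 * (Real.pi:ℂ) * Complex.I) ≠ 0 := by
      simp [Complex.I_ne_zero, hπ]
    have h1 : ((1:ℂ) - 3 * n) * (2 * (Real.pi:ℂ) * Complex.I) = 0 := by
      linear_combination 3 * hn
    have h3 : (1:ℂ) - 3 * n = 0 := by
      rcases mul_eq_zero.mp h1 with h | h
      · exact h
      · exact absurd h h2
    have h4 : ((3 * n : ℤ) : ℂ) = ((1 : ℤ) : ℂ) := by push_cast; linear_combination -h3
    have h5 : (3 * n : ℤ) = 1 := by exact_mod_cast h4
    omega
  have hsum : 1 + ω + ω ^ 2 = 0 := by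
    have hfac : (ω - 1) * (ω ^ 2 + ω + 1) = 0 := by linear_combination hω3
    rcases mul_eq_zero.mp hfac with h | h
    · exact absurd (by linear_combination h) hωne1
    · linear_combination h
  have hω2 : Complex.exp (-(2 * Real.pi * Complex.I) / 3) = ω ^ 2 := by
    have hx : Complex.exp (-(2 * Real.pi * Complex.I) / 3) * ω = 1 := by
      rw [hωdef, ← Complex.exp_add,
        show -(2 * (Real.pi:ℂ) * Complex.I) / 3 + 2 * (Real.pi:ℂ) * Complex.I / 3 = 0 by ring,
        Complex.exp_zero]
    have hx2 : Complex.exp (-(2 * Real.pi * Complex.I) / 3) * ω = ω ^ 2 * ω := by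
      rw [hx]; linear_combination -hω3
    exact mul_right_cancel₀ hωne0 hx2
  have hcω : (starRingEnd ℂ) ω = ω ^ 2 := by
    rw [hωdef, ← Complex.exp_conj,
      show (starRingEnd ℂ) (2 * (Real.pi:ℂ) * Complex.I / 3)
        = -(2 * (Real.pi:ℂ) * Complex.I) / 3 by
      simp [map_div₀, Complex.conj_I, map_ofNat]]
    exact hω2
  have hN : (starRingEnd ℂ) a * a + (starRingEnd ℂ) b * b + (starRingEnd ℂ) c * c = 1 := by
    rw [mul_comm ((starRingEnd ℂ) a) a, mul_comm ((starRingEnd ℂ) b) b,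
      mul_comm ((starRingEnd ℂ) c) c, Complex.mul_conj, Complex.mul_conj, Complex.mul_conj,
      ← Complex.ofReal_add, ← Complex.ofReal_add]
    norm_cast
    simp only [← Complex.sq_norm]
    exact hnorm
  have hT := congrArg (starRingEnd ℂ) horth
  simp only [map_add, map_mul, Complex.conj_conj, map_zero] at hT
  -- hT : a * conj b + c * conj a + b * conj c = 0
  have hu1 : ((starRingEnd ℂ) a + (starRingEnd ℂ) b + (starRingEnd ℂ) c) * (a + b + c) = 1 := by
    linear_combination hN + horth + hT
  have hv1 : ((starRingEnd ℂ) a + ω ^ 4 * (starRingEnd ℂ) b + ω ^ 2 * (starRingEnd ℂ) c)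
      * (a + ω ^ 2 * b + ω * c) = 1 := by
    linear_combination hN + ω ^ 2 * horth + ω * hT
      + (ω * ((starRingEnd ℂ) b * a) + (ω ^ 3 + 1) * ((starRingEnd ℂ) b * b)
        + ω ^ 2 * ((starRingEnd ℂ) b * c) + ω * ((starRingEnd ℂ) c * b)
        + (starRingEnd ℂ) c * c) * hω3
  have hw1 : ((starRingEnd ℂ) a + ω ^ 2 * (starRingEnd ℂ) b + ω ^ 4 * (starRingEnd ℂ) c)
      * (a + ω * b + ω ^ 2 * c) = 1 := by
    linear_combination hN + ω * horth + ω ^ 2 * hT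
      + ((starRingEnd ℂ) b * b + ω * ((starRingEnd ℂ) b * c) + ω * ((starRingEnd ℂ) c * a)
        + ω ^ 2 * ((starRingEnd ℂ) c * b) + (ω ^ 3 + 1) * ((starRingEnd ℂ) c * c)) * hω3
  have hu1' : (starRingEnd ℂ) (a + b + c) * (a + b + c) = 1 := by
    simp only [map_add]; exact hu1
  have hu : a + b + c = Complex.exp ((a + b + c).arg * Complex.I) := by
    apply exp_arg_of_unit
    exact hu1'
  have hvu : (a + ω ^ 2 * b + ω * c) * (starRingEnd ℂ) (a + b + c)
      = Complex.exp (((a + ω ^ 2 * b + ω * c) * (starRingEnd ℂ) (a + b + c)).arg * Complex.I) := by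
    apply exp_arg_of_unit
    simp only [map_add, map_mul, map_pow, Complex.conj_conj, hcω]
    linear_combination (((starRingEnd ℂ) a + (starRingEnd ℂ) b + (starRingEnd ℂ) c)
      * (a + b + c)) * hv1 + hu1
  have hwu : (a + ω * b + ω ^ 2 * c) * (starRingEnd ℂ) (a + b + c)
      = Complex.exp (((a + ω * b + ω ^ 2 * c) * (starRingEnd ℂ) (a + b + c)).arg * Complex.I) := by
    apply exp_arg_of_unit
    simp only [map_add, map_mul, map_pow, Complex.conj_conj, hcω]
    linear_combination (((starRingEnd ℂ) a + (starRingEnd ℂ) b + (starRingEnd ℂ) c)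
      * (a + b + c)) * hw1 + hu1
  set E1 : ℂ :=
    Complex.exp (((a + ω ^ 2 * b + ω * c) * (starRingEnd ℂ) (a + b + c)).arg * Complex.I) with hE1
  set E2 : ℂ :=
    Complex.exp (((a + ω * b + ω ^ 2 * c) * (starRingEnd ℂ) (a + b + c)).arg * Complex.I) with hE2
  refine ⟨(a + b + c).arg,
    ((a + ω ^ 2 * b + ω * c) * (starRingEnd ℂ) (a + b + c)).arg,
    ((a + ω * b + ω ^ 2 * c) * (starRingEnd ℂ) (a + b + c)).arg, ?_, ?_, ?_⟩
  · linear_combination ((1:ℂ)/3) * hu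
      + ((1:ℂ)/3) * ((a + b + c) * hvu - (a + ω ^ 2 * b + ω * c) * hu1' + E1 * hu)
      + ((1:ℂ)/3) * ((a + b + c) * hwu - (a + ω * b + ω ^ 2 * c) * hu1' + E2 * hu)
      - ((b + c)/3) * hsum
  · rw [hω2]
    linear_combination ((1:ℂ)/3) * hu
      + (ω/3) * ((a + b + c) * hvu - (a + ω ^ 2 * b + ω * c) * hu1' + E1 * hu)
      + (ω ^ 2/3) * ((a + b + c) * hwu - (a + ω * b + ω ^ 2 * c) * hu1' + E2 * hu)
      - ((a + c)/3) * hsum - ((2 * b + ω * c)/3) * hω3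
  · rw [hω2]
    linear_combination ((1:ℂ)/3) * hu
      + (ω ^ 2/3) * ((a + b + c) * hvu - (a + ω ^ 2 * b + ω * c) * hu1' + E1 * hu)
      + (ω/3) * ((a + b + c) * hwu - (a + ω * b + ω ^ 2 * c) * hu1' + E2 * hu)
      - ((a + b)/3) * hsum - ((ω * b + 2 * c)/3) * hω3
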